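/- arXiv:2101.01966 — 3 statements merged into one kernel-verified Lean document; each statement's English description precedes it below -/
import Mathlib

section
/- Let (𝔙, 𝔙⁺) be a non-degenerate ordered 𝔉-bimodule such that 𝔙⁺ is proper and Archimedean. If 𝔲, 𝔳 ∈ 𝔙⁺ with 𝔲 ≤ 𝔳 (i.e. 𝔳 − 𝔲 ∈ 𝔙⁺), then the order of 𝔲 is at most the order of 𝔳. -/
noncomputable section

open scoped Matrix.Norms.L2Operator

/-! ### The *-algebra 𝔉 of ∞×∞ complex matrices with finitely many nonzero entries -/

/-- `∞ × ∞` complex matrices (indexed by `ℕ × ℕ`). -/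
abbrev FMat := ℕ → ℕ → ℂ

/-- The matrix has (at most) finitely many nonzero entries: it is supported in some
`n × n` top-left block. -/
def IsFin (a : FMat) : Prop := ∃ n, ∀ i j, (n ≤ i ∨ n ≤ j) → a i j = 0

/-- Matrix multiplication in `𝔉` (the `tsum` is a finite sum for finitely supported
matrices). -/
def fmul (a b : FMat) : FMat := fun i k => ∑' j, a i j * b j k

/-- The involution (conjugate transpose) on `𝔉`. -/
def fstar (a : FMat) : FMat := fun i j => starRingEnd ℂ (a j i)

/-- The matrix unit `𝔢_{i,j}`. -/
def eUnit (i j : ℕ) : FMat := fun k l => if k = i ∧ l = j then 1 else 0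

/-- `𝔍ₙ = Σ_{i<n} 𝔢_{i,i}`, the partial identities. -/
def JMat (n : ℕ) : FMat := fun k l => if k = l ∧ k < n then 1 else 0

/-- `𝔎ₙ = Σ_{i<n} 𝔢_{i,n+i}`, used for `2×2`-block constructions. -/
def KMat (n : ℕ) : FMat := fun k l => if l = k + n ∧ k < n then 1 else 0

/-- The diagonal idempotent `Σ_{i ∈ s} 𝔢_{i,i}` associated to a finite set `s ⊂ ℕ`. -/
def finsetDiag (s : Finset ℕ) : FMat := fun k l => if k = l ∧ k ∈ s then 1 else 0

/-- The operator norm on `𝔉`: the supremum of the (C*-algebra) operator norms of the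
finite top-left blocks (for a finitely supported matrix the blocks stabilize). -/
def fnorm (a : FMat) : ℝ :=
  ⨆ n : ℕ, ‖(Matrix.of fun i j : Fin n => a i j : Matrix (Fin n) (Fin n) ℂ)‖

/-- The order `o(𝔞)` of a finitely supported matrix: the least `n` such that `𝔞` is
supported in the top-left `n × n` block. -/
def matOrd (a : FMat) : ℕ := sInf {n | ∀ i j, (n ≤ i ∨ n ≤ j) → a i j = 0}

/-- A local unitary in `𝔉`: `𝔞*𝔞 = 𝔍_{o(𝔞)} = 𝔞𝔞*`. -/
def IsLocalUnitary (a : FMat) : Prop :=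
  IsFin a ∧ fmul (fstar a) a = JMat (matOrd a) ∧ fmul a (fstar a) = JMat (matOrd a)

/-! ### Non-degenerate *-𝔉-bimodules -/

/-- A non-degenerate `*`-`𝔉`-bimodule structure on a complex vector space `V`:
left and right actions of (finitely supported) infinite matrices together with an
involution, compatible with each other and with the complex scalars, such that every
element is `𝔍ₙ·v·𝔍ₙ` for some `n`. -/
structure FBimod (V : Type*) [AddCommGroup V] [Module ℂ V] where
  lsmul : FMat → V → V
  rsmul : V → FMat → V
  star : V → V
  lsmul_add : ∀ a u v, lsmul a (u + v) = lsmul a u + lsmul a v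
  rsmul_add : ∀ u v b, rsmul (u + v) b = rsmul u b + rsmul v b
  add_lsmul : ∀ a b v, IsFin a → IsFin b → lsmul (a + b) v = lsmul a v + lsmul b v
  rsmul_add' : ∀ v a b, IsFin a → IsFin b → rsmul v (a + b) = rsmul v a + rsmul v b
  smul_lsmul : ∀ (c : ℂ) a v, IsFin a → lsmul (c • a) v = c • lsmul a v
  smul_rsmul : ∀ (c : ℂ) v a, IsFin a → rsmul v (c • a) = c • rsmul v a
  mul_lsmul : ∀ a b v, IsFin a → IsFin b → lsmul (fmul a b) v = lsmul a (lsmul b v)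
  rsmul_mul : ∀ v a b, IsFin a → IsFin b → rsmul v (fmul a b) = rsmul (rsmul v a) b
  lsmul_rsmul : ∀ a v b, IsFin a → IsFin b → rsmul (lsmul a v) b = lsmul a (rsmul v b)
  star_add : ∀ u v, star (u + v) = star u + star v
  star_star : ∀ v, star (star v) = v
  star_lsmul : ∀ a v, IsFin a → star (lsmul a v) = rsmul (star v) (fstar a)
  star_rsmul : ∀ v a, IsFin a → star (rsmul v a) = lsmul (fstar a) (star v)
  smul_compat : ∀ (c : ℂ) (n : ℕ) v, lsmul (JMat n) (rsmul v (JMat n)) = v →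
    lsmul (c • JMat n) v = c • v
  nondeg : ∀ v, ∃ n, lsmul (JMat n) (rsmul v (JMat n)) = v

namespace FBimod

variable {V : Type*} [AddCommGroup V] [Module ℂ V] (M : FBimod V)

/-- `𝔍ₙ 𝔳 𝔍ₙ`. -/
def cut (n : ℕ) (v : V) : V := M.lsmul (JMat n) (M.rsmul v (JMat n))

/-- The order `o(𝔳)`: the smallest `n` with `𝔍ₙ 𝔳 𝔍ₙ = 𝔳`. -/
def ord (v : V) : ℕ := sInf {n | M.cut n v = v}

/-- `𝔞* 𝔳 𝔞`. -/
def conj (a : FMat) (v : V) : V := M.lsmul (fstar a) (M.rsmul v a)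

/-- `C` is a bimodule cone: consists of self-adjoint elements, is closed under
addition and under `𝔳 ↦ 𝔞*𝔳𝔞` for `𝔞 ∈ 𝔉`. -/
def IsCone (C : Set V) : Prop :=
  (∀ v ∈ C, M.star v = v) ∧ (∀ u ∈ C, ∀ v ∈ C, u + v ∈ C) ∧
    (∀ v ∈ C, ∀ a : FMat, IsFin a → M.conj a v ∈ C)

/-- The cone `C` is proper: `C ∩ (−C) = {0}`. -/
def ConeProper (C : Set V) : Prop := ∀ v ∈ C, -v ∈ C → v = 0

/-- The cone `C` is Archimedean. -/
def ConeArch (C : Set V) : Prop :=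
  ∀ u ∈ C, ∀ v : V, M.star v = v → (∀ k : ℝ, 0 < k → (k : ℂ) • u + v ∈ C) → v ∈ C

/-- The cone `C` is generating. -/
def ConeGen (C : Set V) : Prop :=
  ∀ v : V, ∃ v₀ ∈ C, ∃ v₁ ∈ C, ∃ v₂ ∈ C, ∃ v₃ ∈ C,
    v = v₀ + Complex.I • v₁ - v₂ - Complex.I • v₃

/-- `(𝔳₁, 𝔳₂)ₙ⁺ = 𝔳₁ + 𝔎ₙ* 𝔳₂ 𝔎ₙ` (the diagonal `2×2`-block `diag(𝔳₁,𝔳₂)`). -/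
def pairPlus (n : ℕ) (v₁ v₂ : V) : V :=
  v₁ + M.lsmul (fstar (KMat n)) (M.rsmul v₂ (KMat n))

/-- `saₙ(𝔳) = 𝔍ₙ 𝔳 𝔎ₙ + 𝔎ₙ* 𝔳* 𝔍ₙ` (the off-diagonal `2×2`-block of `𝔳`). -/
def san (n : ℕ) (v : V) : V :=
  M.lsmul (JMat n) (M.rsmul v (KMat n)) +
    M.lsmul (fstar (KMat n)) (M.rsmul (M.star v) (JMat n))

/-- `𝔲` and `𝔳` are `𝔉`-independent: compressed onto disjoint diagonal blocks. -/
def FIndep (u v : V) : Prop :=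
  ∃ I J : Finset ℕ, Disjoint I J ∧
    M.lsmul (finsetDiag I) (M.rsmul u (finsetDiag I)) = u ∧
    M.lsmul (finsetDiag J) (M.rsmul v (finsetDiag J)) = v

/-- `(𝔙, C, abs)` is a non-degenerate absolutely ordered `𝔉`-bimodule
(Definition 18 of the paper). -/
structure IsAbsOrd (C : Set V) (abs : V → V) : Prop where
  cone : M.IsCone C
  abs_mem : ∀ v, abs v ∈ C
  ord_abs_le : ∀ v, M.ord (abs v) ≤ M.ord v
  abs_of_mem : ∀ v ∈ C, abs v = v
  pos_part : ∀ v, M.pairPlus (M.ord v) (abs (M.star v)) (abs v) + M.san (M.ord v) v ∈ C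
  abs_smul_le : ∀ (a b : FMat), IsFin a → IsFin b → ∀ v,
    (fnorm a : ℂ) • abs (M.rsmul (abs v) b) - abs (M.lsmul a (M.rsmul v b)) ∈ C
  indep_add : ∀ u v, M.FIndep u v → abs (u + v) = abs u + abs v
  absorb : ∀ u ∈ C, ∀ v ∈ C, ∀ w ∈ C, abs (u - v) = u + v → v - w ∈ C →
    abs (u - w) = u + w
  ortho_pm : ∀ u ∈ C, ∀ v ∈ C, ∀ w ∈ C, abs (u - v) = u + v → abs (u - w) = u + w →
    abs (u - abs (v + w)) = u + abs (v + w) ∧ abs (u - abs (v - w)) = u + abs (v - w)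

/-- `eⁿ = Σ_{i<n} 𝔢_{i,0} 𝔢 𝔢_{0,i}` for an element `𝔢` of order `1`. -/
def epow (e : V) (n : ℕ) : V :=
  ∑ i ∈ Finset.range n, M.lsmul (eUnit i 0) (M.rsmul e (eUnit 0 i))

/-- `𝔢` is a local order unit for `(𝔙, C)`. -/
def IsLocalOrderUnit (C : Set V) (e : V) : Prop :=
  e ∈ C ∧ M.cut 1 e = e ∧ ∀ v : V, M.cut 1 v = v → ∃ k : ℝ, 0 < k ∧
    M.pairPlus 1 ((k : ℂ) • e) ((k : ℂ) • e) + M.san 1 v ∈ C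

/-- `(𝔙, C, 𝔢)` is a local `𝔉`-order unit bimodule. -/
def IsLocalUnitBimod (C : Set V) (e : V) : Prop :=
  M.IsCone C ∧ ConeProper C ∧ M.ConeArch C ∧ M.IsLocalOrderUnit C e

/-- The norm associated to a local order unit:
`‖𝔳‖ = inf { k > 0 : (k𝔢^{o(𝔳)}, k𝔢^{o(𝔳)})⁺_{o(𝔳)} + sa_{o(𝔳)}(𝔳) ∈ C }`. -/
def lnorm (C : Set V) (e : V) (v : V) : ℝ :=
  sInf {k : ℝ | 0 < k ∧
    M.pairPlus (M.ord v) ((k : ℂ) • M.epow e (M.ord v)) ((k : ℂ) • M.epow e (M.ord v)) +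
      M.san (M.ord v) v ∈ C}

/-- `𝔲 ⊥_∞ 𝔳` with respect to the local-order-unit norm. -/
def PerpInf (C : Set V) (e : V) (u v : V) : Prop :=
  ∀ k₁ k₂ : ℝ, M.lnorm C e ((k₁ : ℂ) • u + (k₂ : ℂ) • v) =
    max (M.lnorm C e ((k₁ : ℂ) • u)) (M.lnorm C e ((k₂ : ℂ) • v))

end FBimod
/-! ### Matrices over a complex *-vector space -/

section MatrixLevel

variable {V : Type*} [AddCommGroup V] [Module ℂ V] [StarAddMonoid V] [StarModule ℂ V]

/-- Conjugate transpose of a rectangular matrix over a `*`-vector space. -/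
def mstar {m n : ℕ} (v : Matrix (Fin m) (Fin n) V) : Matrix (Fin n) (Fin m) V :=
  fun i j => star (v j i)

/-- Left action of a scalar matrix: `(a v)_{ij} = Σ_k a_{ik} v_{kj}`. -/
def aSmul {r m n : ℕ} (a : Matrix (Fin r) (Fin m) ℂ) (v : Matrix (Fin m) (Fin n) V) :
    Matrix (Fin r) (Fin n) V :=
  fun i j => ∑ k, a i k • v k j

/-- Right action of a scalar matrix: `(v b)_{ij} = Σ_k b_{kj} • v_{ik}`. -/
def smulB {m n s : ℕ} (v : Matrix (Fin m) (Fin n) V) (b : Matrix (Fin n) (Fin s) ℂ) :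
    Matrix (Fin m) (Fin s) V :=
  fun i j => ∑ k, b k j • v i k

/-- Direct sum (block diagonal) of rectangular matrices over `V`. -/
def dsum {m n r s : ℕ} (v : Matrix (Fin m) (Fin n) V) (w : Matrix (Fin r) (Fin s) V) :
    Matrix (Fin (m + r)) (Fin (n + s)) V :=
  fun i j =>
    if hi : (i : ℕ) < m then
      (if hj : (j : ℕ) < n then v ⟨i, hi⟩ ⟨j, hj⟩ else 0)
    else
      (if hj : (j : ℕ) < n then 0
       else w ⟨(i : ℕ) - m, by have := i.isLt; omega⟩ ⟨(j : ℕ) - n, by have := j.isLt; omega⟩)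

end MatrixLevel

/-- The L2-operator norm of a rectangular complex scalar matrix. -/
def cnorm {r m : ℕ} (a : Matrix (Fin r) (Fin m) ℂ) : ℝ := ‖a‖

/-- Embedding of a finite rectangular complex matrix into `𝔉`. -/
def embC {r m : ℕ} (a : Matrix (Fin r) (Fin m) ℂ) : FMat :=
  fun i j => if hi : i < r then (if hj : j < m then a ⟨i, hi⟩ ⟨j, hj⟩ else 0) else 0

/-- `e ⊕ ⋯ ⊕ e`: the diagonal matrix with constant diagonal `e`. -/
def diagE {V : Type*} [AddCommGroup V] (e : V) (n : ℕ) : Matrix (Fin n) (Fin n) V :=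
  Matrix.of fun i j => if i = j then e else 0

/-! ### Absolutely matrix ordered spaces and absolute matrix order unit spaces -/

/-- An absolutely matrix ordered space structure on a complex `*`-vector space `V`:
matrix cones `Mₙ(V)⁺` and absolute values `|·|_{m,n} : M_{m,n}(V) → Mₙ(V)⁺`
(Definition 4.1 of Karn-Kumar). -/
structure AMOS (V : Type*) [AddCommGroup V] [Module ℂ V] [StarAddMonoid V]
    [StarModule ℂ V] where
  pos : ∀ n : ℕ, Set (Matrix (Fin n) (Fin n) V)
  abs : ∀ m n : ℕ, Matrix (Fin m) (Fin n) V → Matrix (Fin n) (Fin n) V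
  pos_star : ∀ n, ∀ v ∈ pos n, mstar v = v
  pos_add : ∀ n, ∀ u ∈ pos n, ∀ v ∈ pos n, u + v ∈ pos n
  pos_conj : ∀ m n (a : Matrix (Fin n) (Fin m) ℂ), ∀ v ∈ pos n,
    aSmul a.conjTranspose (smulB v a) ∈ pos m
  abs_mem : ∀ m n v, abs m n v ∈ pos n
  abs_of_pos : ∀ n, ∀ v ∈ pos n, abs n n v = v
  abs_add_self : ∀ n (v : Matrix (Fin n) (Fin n) V), mstar v = v →
    abs n n v + v ∈ pos n ∧ abs n n v - v ∈ pos n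
  abs_real_smul : ∀ n (k : ℝ) (v : Matrix (Fin n) (Fin n) V), mstar v = v →
    abs n n ((k : ℂ) • v) = ((|k| : ℝ) : ℂ) • abs n n v
  absorb : ∀ n, ∀ u ∈ pos n, ∀ v ∈ pos n, ∀ w ∈ pos n,
    abs n n (u - v) = u + v → v - w ∈ pos n → abs n n (u - w) = u + w
  ortho_pm : ∀ n, ∀ u ∈ pos n, ∀ v ∈ pos n, ∀ w ∈ pos n,
    abs n n (u - v) = u + v → abs n n (u - w) = u + w →
    abs n n (u - abs n n (v + w)) = u + abs n n (v + w) ∧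
      abs n n (u - abs n n (v - w)) = u + abs n n (v - w)
  abs_smul_le : ∀ (r m n s : ℕ) (α : Matrix (Fin r) (Fin m) ℂ)
    (v : Matrix (Fin m) (Fin n) V) (β : Matrix (Fin n) (Fin s) ℂ),
    (cnorm α : ℂ) • abs n s (smulB (abs m n v) β) - abs r s (aSmul α (smulB v β)) ∈ pos s
  abs_dsum : ∀ (m n r s : ℕ) (v : Matrix (Fin m) (Fin n) V) (w : Matrix (Fin r) (Fin s) V),
    abs (m + r) (n + s) (dsum v w) = dsum (abs m n v) (abs r s w)

/-- A matrix order unit structure on top of an absolutely matrix ordered space: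
an order unit `e` with `V⁺` proper and each `Mₙ(V)⁺` Archimedean. -/
structure AMOUS (V : Type*) [AddCommGroup V] [Module ℂ V] [StarAddMonoid V]
    [StarModule ℂ V] extends AMOS V where
  e : V
  e_pos : diagE e 1 ∈ pos 1
  proper : ∀ v ∈ pos 1, -v ∈ pos 1 → v = 0
  arch : ∀ n (v : Matrix (Fin n) (Fin n) V), mstar v = v →
    (∀ k : ℝ, 0 < k → (k : ℂ) • diagE e n + v ∈ pos n) →
    v ∈ pos n
  unit : ∀ n (v : Matrix (Fin n) (Fin n) V), mstar v = v →
    ∃ k : ℝ, 0 < k ∧ (k : ℂ) • diagE e n - v ∈ pos n ∧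
      (k : ℂ) • diagE e n + v ∈ pos n

namespace AMOUS

variable {V : Type*} [AddCommGroup V] [Module ℂ V] [StarAddMonoid V] [StarModule ℂ V]
variable (A : AMOUS V)

/-- `eⁿ = e ⊕ ⋯ ⊕ e ∈ Mₙ(V)`. -/
def eN (n : ℕ) : Matrix (Fin n) (Fin n) V := diagE A.e n

/-- The `2n × 2n` matrix `[[a, b], [c, d]]` of `n × n` blocks. -/
def block2 {n : ℕ} (a b c d : Matrix (Fin n) (Fin n) V) :
    Matrix (Fin (n + n)) (Fin (n + n)) V :=
  fun i j =>
    if hi : (i : ℕ) < n then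
      (if hj : (j : ℕ) < n then a ⟨i, hi⟩ ⟨j, hj⟩
       else b ⟨i, hi⟩ ⟨(j : ℕ) - n, by have := j.isLt; omega⟩)
    else
      (if hj : (j : ℕ) < n then c ⟨(i : ℕ) - n, by have := i.isLt; omega⟩ ⟨j, hj⟩
       else d ⟨(i : ℕ) - n, by have := i.isLt; omega⟩ ⟨(j : ℕ) - n, by have := j.isLt; omega⟩)

end AMOUS
namespace AMOUS

variable {V : Type*} [AddCommGroup V] [Module ℂ V] [StarAddMonoid V] [StarModule ℂ V]
variable (A : AMOUS V)

/-- The matrix norms of a matrix order unit space: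
`‖v‖ₙ = inf { k > 0 : [[k eⁿ, v], [v*, k eⁿ]] ∈ M₂ₙ(V)⁺ }`. -/
def mnorm (n : ℕ) (v : Matrix (Fin n) (Fin n) V) : ℝ :=
  sInf {k : ℝ | 0 < k ∧
    block2 ((k : ℂ) • A.eN n) v (mstar v) ((k : ℂ) • A.eN n) ∈ A.pos (n + n)}

/-- Orthogonality `u ⊥ v` (for positive elements): `|u − v| = u + v`. -/
def Perp {n : ℕ} (u v : Matrix (Fin n) (Fin n) V) : Prop :=
  A.abs n n (u - v) = u + v

/-- `u ⊥_∞ v`: `‖k₁ u + k₂ v‖ = max {‖k₁ u‖, ‖k₂ v‖}` for all real `k₁, k₂`. -/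
def PerpInfM {n : ℕ} (u v : Matrix (Fin n) (Fin n) V) : Prop :=
  ∀ k₁ k₂ : ℝ, A.mnorm n ((k₁ : ℂ) • u + (k₂ : ℂ) • v) =
    max (A.mnorm n ((k₁ : ℂ) • u)) (A.mnorm n ((k₂ : ℂ) • v))

/-- `u ⊥_∞^a v`: absolute `∞`-orthogonality. -/
def PerpInfA {n : ℕ} (u v : Matrix (Fin n) (Fin n) V) : Prop :=
  ∀ u₁ ∈ A.pos n, ∀ v₁ ∈ A.pos n, u - u₁ ∈ A.pos n → v - v₁ ∈ A.pos n → A.PerpInfM u₁ v₁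

/-- `(V, {Mₙ(V)⁺}, {|·|}, e)` is an absolute matrix order unit space:
`⊥ = ⊥_∞^a` on each `Mₙ(V)⁺`. -/
def IsAbsolute : Prop :=
  ∀ n, ∀ u ∈ A.pos n, ∀ v ∈ A.pos n, (A.Perp u v ↔ A.PerpInfA u v)

/-- `p` is an order projection in `Mₙ(V)`: `p* = p` and `|2p − eⁿ| = eⁿ`. -/
def IsOP (n : ℕ) (p : Matrix (Fin n) (Fin n) V) : Prop :=
  mstar p = p ∧ A.abs n n ((2 : ℂ) • p - A.eN n) = A.eN n

/-- `v ∈ M_{m,n}(V)` is a partial isometry: `|v|` and `|v*|` are order projections. -/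
def IsPI {m n : ℕ} (v : Matrix (Fin m) (Fin n) V) : Prop :=
  A.IsOP n (A.abs m n v) ∧ A.IsOP m (A.abs n m (mstar v))

end AMOUS

/-- An element of `M_∞(V)`: a matrix at some level `n`. -/
def OPE (V : Type*) : Type _ := Σ n : ℕ, Matrix (Fin n) (Fin n) V

namespace OPE

variable {V : Type*} [AddCommGroup V] [Module ℂ V] [StarAddMonoid V] [StarModule ℂ V]

/-- Direct sum in `M_∞(V)`. -/
def d (p q : OPE V) : OPE V := ⟨p.1 + q.1, dsum p.2 q.2⟩

/-- The zero order projection (at level 1). -/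
def zero (V : Type*) [AddCommGroup V] : OPE V := ⟨1, 0⟩

end OPE

namespace AMOUS

variable {V : Type*} [AddCommGroup V] [Module ℂ V] [StarAddMonoid V] [StarModule ℂ V]
variable (A : AMOUS V)

/-- Membership in `𝒪𝒫_∞(V)`. -/
def IsOPE (p : OPE V) : Prop := A.IsOP p.1 p.2

/-- `eⁿ` as an element of `𝒪𝒫_∞(V)`. -/
def eOPE (n : ℕ) : OPE V := ⟨n, A.eN n⟩

/-- Partial isometric equivalence `p ∼ q` of order projections: there is a partial
isometry `v` with `p = |v*|` and `q = |v|`. -/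
def Sim (p q : OPE V) : Prop :=
  ∃ v : Matrix (Fin p.1) (Fin q.1) V,
    A.IsPI v ∧ p.2 = A.abs q.1 p.1 (mstar v) ∧ q.2 = A.abs p.1 q.1 v

/-- Condition (T). -/
def CondT : Prop :=
  ∀ (m n l : ℕ) (u : Matrix (Fin m) (Fin n) V) (v : Matrix (Fin l) (Fin n) V),
    A.IsPI u → A.IsPI v → A.abs m n u = A.abs l n v →
    ∃ w : Matrix (Fin m) (Fin l) V, A.IsPI w ∧
      A.abs l m (mstar w) = A.abs n m (mstar u) ∧ A.abs m l w = A.abs n l (mstar v)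

/-- Stabilized equivalence `p ≈ q`: `p ⊕ r ∼ q ⊕ r` for some order projection `r`. -/
def ASim (p q : OPE V) : Prop := ∃ r : OPE V, A.IsOPE r ∧ A.Sim (p.d r) (q.d r)

/-- A pair of order projections, representing an element `[(p,q)]` of `K₀(V)`. -/
def IsOPPair (x : OPE V × OPE V) : Prop := A.IsOPE x.1 ∧ A.IsOPE x.2

/-- The relation `(p₁,q₁) ≡ (p₂,q₂) ↔ p₁ ⊕ q₂ ≈ p₂ ⊕ q₁` defining `K₀(V)`. -/
def Krel (x y : OPE V × OPE V) : Prop := A.ASim (x.1.d y.2) (y.1.d x.2)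

/-- Addition of representatives of `K₀(V)` classes. -/
def kadd (x y : OPE V × OPE V) : OPE V × OPE V := (x.1.d y.1, x.2.d y.2)

/-- The representative of the zero class of `K₀(V)`. -/
def kzero : OPE V × OPE V := (OPE.zero V, OPE.zero V)

/-- Representative-level membership in the cone `K₀(V)⁺ = {[(p,0)] : p ∈ 𝒪𝒫_∞(V)}`. -/
def KPos (x : OPE V × OPE V) : Prop :=
  ∃ p : OPE V, A.IsOPE p ∧ A.Krel x (p, OPE.zero V)

/-- Representative-level order `[x] ≤ [y]` in `K₀(V)`: `[y] − [x] ∈ K₀(V)⁺`. -/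
def Kle (x y : OPE V × OPE V) : Prop :=
  ∃ r : OPE V, A.IsOPE r ∧ A.Krel (kadd x (r, OPE.zero V)) y

/-- The order projection `p ∈ Mₙ(V)` is finite: `q ∼ p` and `q ≥ p` imply `q = p`. -/
def FiniteOP (n : ℕ) (p : Matrix (Fin n) (Fin n) V) : Prop :=
  ∀ q : Matrix (Fin n) (Fin n) V, A.IsOP n q → A.Sim ⟨n, q⟩ ⟨n, p⟩ →
    q - p ∈ A.pos n → q = p

end AMOUS

/-! ### Maps between absolute matrix order unit spaces -/

section Maps

variable {V W : Type*} [AddCommGroup V] [Module ℂ V] [StarAddMonoid V] [StarModule ℂ V]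
  [AddCommGroup W] [Module ℂ W] [StarAddMonoid W] [StarModule ℂ W]

/-- The amplification `φₙ` (entrywise application) of a map. -/
def mmap (φ : V →ₗ[ℂ] W) {m n : ℕ} (v : Matrix (Fin m) (Fin n) V) :
    Matrix (Fin m) (Fin n) W :=
  fun i j => φ (v i j)

/-- `φ` is completely `|·|`-preserving: every amplification `φₙ` is `|·|`-preserving. -/
def CAbsPres (A : AMOUS V) (B : AMOUS W) (φ : V →ₗ[ℂ] W) : Prop :=
  ∀ (n : ℕ) (v : Matrix (Fin n) (Fin n) V), B.abs n n (mmap φ v) = mmap φ (A.abs n n v)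

/-- `φ` and `ψ` are completely orthogonal: `φₙ(u) ⊥ ψₙ(v)` for all positive `u, v`. -/
def COrth (A : AMOUS V) (B : AMOUS W) (φ ψ : V →ₗ[ℂ] W) : Prop :=
  ∀ (n : ℕ) (u v : Matrix (Fin n) (Fin n) V), u ∈ A.pos n → v ∈ A.pos n →
    B.Perp (mmap φ u) (mmap ψ v)

/-- The image of an element of `M_∞(V)` under (the amplifications of) `φ`. -/
def mmapOPE (φ : V →ₗ[ℂ] W) (p : OPE V) : OPE W := ⟨p.1, mmap φ p.2⟩

/-- `F` represents a group homomorphism `K₀(V) → K₀(W)` making the `K₀` diagram of `φ`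
commute: it maps `K₀`-representatives to `K₀`-representatives, respects the defining
relation `≡`, is additive, and satisfies `F([(p, 0)]) = [(φ(p), 0)]`. -/
def K0HomProp (A : AMOUS V) (B : AMOUS W) (φ : V →ₗ[ℂ] W)
    (F : OPE V × OPE V → OPE W × OPE W) : Prop :=
  (∀ x, A.IsOPPair x → B.IsOPPair (F x)) ∧
  (∀ x y, A.IsOPPair x → A.IsOPPair y → A.Krel x y → B.Krel (F x) (F y)) ∧
  (∀ x y, A.IsOPPair x → A.IsOPPair y → B.Krel (F (AMOUS.kadd x y)) (AMOUS.kadd (F x) (F y))) ∧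
  (∀ p : OPE V, A.IsOPE p → B.Krel (F (p, OPE.zero V)) (mmapOPE φ p, OPE.zero W))

/-- The completely bounded norm of `φ` with respect to the order unit matrix norms. -/
def cbNorm (A : AMOUS V) (B : AMOUS W) (φ : V →ₗ[ℂ] W) : ℝ :=
  ⨆ n : ℕ, sInf {c : ℝ | 0 ≤ c ∧
    ∀ v : Matrix (Fin n) (Fin n) V, B.mnorm n (mmap φ v) ≤ c * A.mnorm n v}

end Maps


namespace Statement0Aux

/-- The complementary diagonal block `J_m - J_n`. -/
def qMat (n m : ℕ) : FMat := fun k l => if k = l ∧ n ≤ k ∧ k < m then 1 else 0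

lemma isFin_JMat (n : ℕ) : IsFin (JMat n) :=
  ⟨n, fun i j h => by simp only [JMat]; rw [if_neg]; rintro ⟨rfl, hi⟩; omega⟩

lemma isFin_qMat (n m : ℕ) : IsFin (qMat n m) :=
  ⟨m, fun i j h => by simp only [qMat]; rw [if_neg]; rintro ⟨rfl, hi⟩; omega⟩

lemma isFin_zero : IsFin (0 : FMat) := ⟨0, fun _ _ _ => rfl⟩

lemma isFin_smul (c : ℂ) {a : FMat} (ha : IsFin a) : IsFin (c • a) := by
  obtain ⟨n, hn⟩ := ha
  exact ⟨n, fun i j h => by simp [hn i j h]⟩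

lemma isFin_add {a b : FMat} (ha : IsFin a) (hb : IsFin b) : IsFin (a + b) := by
  obtain ⟨n, hn⟩ := ha; obtain ⟨k, hk⟩ := hb
  refine ⟨max n k, fun i j h => ?_⟩
  have h1 : a i j = 0 := hn i j (by omega)
  have h2 : b i j = 0 := hk i j (by omega)
  simp [h1, h2]

lemma fstar_JMat (n : ℕ) : fstar (JMat n) = JMat n := by
  funext i j
  simp only [fstar, JMat]
  rcases eq_or_ne i j with rfl | h
  · split_ifs <;> simp
  · rw [if_neg (by tauto), if_neg (by tauto)]; simp

lemma fstar_qMat (n m : ℕ) : fstar (qMat n m) = qMat n m := by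
  funext i j
  simp only [fstar, qMat]
  rcases eq_or_ne i j with rfl | h
  · split_ifs <;> simp
  · rw [if_neg (by tauto), if_neg (by tauto)]; simp

lemma fstar_combo (c d : ℝ) (n m : ℕ) :
    fstar ((c : ℂ) • JMat n + (d : ℂ) • qMat n m)
      = (c : ℂ) • JMat n + (d : ℂ) • qMat n m := by
  funext i j
  have h1 := congrFun (congrFun (fstar_JMat n) i) j
  have h2 := congrFun (congrFun (fstar_qMat n m) i) j
  simp only [fstar, Pi.add_apply, Pi.smul_apply, smul_eq_mul, map_add, map_mul,
    Complex.conj_ofReal] at *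
  rw [h1, h2]

lemma fmul_apply_diag (a b : FMat) (i k : ℕ) (h : ∀ j, j ≠ i → a i j = 0) :
    fmul a b i k = a i i * b i k :=
  tsum_eq_single i (fun j hj => by rw [h j hj, zero_mul])

lemma JMat_diag (n i : ℕ) : ∀ j, j ≠ i → JMat n i j = 0 := by
  intro j hj; simp only [JMat]; rw [if_neg]; rintro ⟨rfl, _⟩; exact hj rfl

lemma qMat_diag (n m i : ℕ) : ∀ j, j ≠ i → qMat n m i j = 0 := by
  intro j hj; simp only [qMat]; rw [if_neg]; rintro ⟨rfl, _⟩; exact hj rfl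

lemma fmul_JMat_JMat (a b : ℕ) : fmul (JMat a) (JMat b) = JMat (min a b) := by
  funext i k
  rw [fmul_apply_diag _ _ _ _ (JMat_diag a i)]
  simp only [JMat]
  split_ifs with h1 h2 h2 <;> simp_all <;> omega

lemma fmul_JMat_qMat (n m : ℕ) : fmul (JMat n) (qMat n m) = 0 := by
  funext i k
  rw [fmul_apply_diag _ _ _ _ (JMat_diag n i)]
  simp only [JMat, qMat]
  split_ifs with h1 h2 <;> simp_all <;> omega

lemma fmul_qMat_JMatn (n m : ℕ) : fmul (qMat n m) (JMat n) = 0 := by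
  funext i k
  rw [fmul_apply_diag _ _ _ _ (qMat_diag n m i)]
  simp only [JMat, qMat]
  split_ifs with h1 h2 <;> simp_all <;> omega

lemma fmul_qMat_qMat (n m : ℕ) : fmul (qMat n m) (qMat n m) = qMat n m := by
  funext i k
  rw [fmul_apply_diag _ _ _ _ (qMat_diag n m i)]
  simp only [qMat]
  split_ifs with h1 h2 <;> simp_all <;> omega

lemma fmul_qMat_JMatm (n m : ℕ) : fmul (qMat n m) (JMat m) = qMat n m := by
  funext i k
  rw [fmul_apply_diag _ _ _ _ (qMat_diag n m i)]
  simp only [qMat, JMat]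
  split_ifs with h1 h2 <;> simp_all <;> omega

lemma fmul_smul_right (a : FMat) (c : ℂ) (b : FMat) :
    fmul a (c • b) = c • fmul a b := by
  funext i k
  simp only [fmul, Pi.smul_apply, smul_eq_mul]
  rw [← tsum_mul_left]
  exact tsum_congr fun j => by ring

lemma JMat_split {n m : ℕ} (h : n ≤ m) : JMat m = JMat n + qMat n m := by
  funext i k
  simp only [JMat, qMat, Pi.add_apply]
  split_ifs <;> simp_all <;> omega


variable {V : Type*} [AddCommGroup V] [Module ℂ V] (M : FBimod V)

lemma lsmul_zero (a : FMat) : M.lsmul a 0 = 0 := by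
  have h := M.lsmul_add a 0 0
  rw [add_zero] at h
  exact (left_eq_add.mp h)

lemma lsmul_neg (a : FMat) (v : V) : M.lsmul a (-v) = -M.lsmul a v := by
  have h := M.lsmul_add a v (-v)
  rw [add_neg_cancel, lsmul_zero] at h
  exact (eq_neg_of_add_eq_zero_right h.symm)

lemma rsmul_zero (v : V) : M.rsmul v (0 : FMat) = 0 := by
  have h := M.rsmul_add' v 0 0 isFin_zero isFin_zero
  rw [add_zero] at h
  exact (left_eq_add.mp h)

lemma sub_rsmul (u v : V) (b : FMat) :
    M.rsmul (u - v) b = M.rsmul u b - M.rsmul v b := by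
  have h := M.rsmul_add (u - v) v b
  rw [sub_add_cancel] at h
  rw [h]; abel

lemma mstar_zero : M.star (0 : V) = 0 := by
  have h := M.star_add 0 0
  rw [add_zero] at h
  exact (left_eq_add.mp h)

lemma mstar_neg (v : V) : M.star (-v) = -M.star v := by
  have h := M.star_add v (-v)
  rw [add_neg_cancel, mstar_zero] at h
  exact (eq_neg_of_add_eq_zero_right h.symm)

/-- Monotonicity of `cut` fixed points. -/
lemma cut_mono {k m : ℕ} {u : V} (h : M.cut k u = u) (hkm : k ≤ m) :
    M.cut m u = u := by
  have hr : M.rsmul u (JMat m) = u := by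
    conv_lhs => rw [← h]
    unfold FBimod.cut
    rw [M.lsmul_rsmul _ _ _ (isFin_JMat k) (isFin_JMat m),
      ← M.rsmul_mul _ _ _ (isFin_JMat k) (isFin_JMat m), fmul_JMat_JMat,
      min_eq_left hkm]
    exact h
  have hl : M.lsmul (JMat m) u = u := by
    conv_lhs => rw [← h]
    unfold FBimod.cut
    rw [← M.mul_lsmul _ _ _ (isFin_JMat m) (isFin_JMat k), fmul_JMat_JMat,
      min_eq_right hkm]
    exact h
  unfold FBimod.cut
  rw [hr, hl]

/-- If `cut m u = u`, `J_m u = u`. -/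
lemma lsmul_J_of_cut {m : ℕ} {u : V} (h : M.cut m u = u) :
    M.lsmul (JMat m) u = u := by
  conv_lhs => rw [← h]
  unfold FBimod.cut
  rw [← M.mul_lsmul _ _ _ (isFin_JMat m) (isFin_JMat m), fmul_JMat_JMat, min_self]
  exact h

/-- If `cut m u = u` and `b J_m = b`, then `cut m (u b) = u b`. -/
lemma cut_rsmul {m : ℕ} {u : V} (h : M.cut m u = u) {b : FMat} (hb : IsFin b)
    (hbJ : fmul b (JMat m) = b) : M.cut m (M.rsmul u b) = M.rsmul u b := by
  have h1 : M.rsmul (M.rsmul u b) (JMat m) = M.rsmul u b := by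
    rw [← M.rsmul_mul _ _ _ hb (isFin_JMat m), hbJ]
  have h2 : M.lsmul (JMat m) (M.rsmul u b) = M.rsmul u b := by
    rw [← M.lsmul_rsmul _ _ _ (isFin_JMat m) hb, lsmul_J_of_cut M h]
  unfold FBimod.cut
  rw [h1, h2]

/-- Pull a scalar out through `lsmul`. -/
lemma lsmul_smul_vec {m : ℕ} (c : ℂ) {a : FMat} (ha : IsFin a)
    (haJ : fmul a (JMat m) = a) {w : V} (hw : M.cut m w = w) :
    M.lsmul a (c • w) = c • M.lsmul a w := by
  have h1 : c • w = M.lsmul (c • JMat m) w := (M.smul_compat c m w hw).symm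
  rw [h1, ← M.mul_lsmul a (c • JMat m) w ha (isFin_smul c (isFin_JMat m)),
    fmul_smul_right, haJ, M.smul_lsmul c a w ha]


/-- Expansion of `(c·p + d·q)* u (c·p + d·q)` into the four corners. -/
lemma key_expand {n m : ℕ} (hnm : n ≤ m) {u : V} (hcut : M.cut m u = u) (c d : ℝ) :
    M.conj ((c : ℂ) • JMat n + (d : ℂ) • qMat n m) u =
      ((c * c : ℝ) : ℂ) • M.lsmul (JMat n) (M.rsmul u (JMat n)) +
      ((c * d : ℝ) : ℂ) • M.lsmul (JMat n) (M.rsmul u (qMat n m)) +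
      ((c * d : ℝ) : ℂ) • M.lsmul (qMat n m) (M.rsmul u (JMat n)) +
      ((d * d : ℝ) : ℂ) • M.lsmul (qMat n m) (M.rsmul u (qMat n m)) := by
  have hfp : fmul (JMat n) (JMat m) = JMat n := by
    rw [fmul_JMat_JMat, min_eq_left hnm]
  have hfq : fmul (qMat n m) (JMat m) = qMat n m := fmul_qMat_JMatm n m
  have hu1 : M.cut m (M.rsmul u (JMat n)) = M.rsmul u (JMat n) :=
    cut_rsmul M hcut (isFin_JMat n) hfp
  have hu2 : M.cut m (M.rsmul u (qMat n m)) = M.rsmul u (qMat n m) :=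
    cut_rsmul M hcut (isFin_qMat n m) hfq
  unfold FBimod.conj
  rw [fstar_combo]
  rw [M.rsmul_add' u _ _ (isFin_smul _ (isFin_JMat n)) (isFin_smul _ (isFin_qMat n m))]
  rw [M.smul_rsmul _ _ _ (isFin_JMat n), M.smul_rsmul _ _ _ (isFin_qMat n m)]
  rw [M.add_lsmul _ _ _ (isFin_smul _ (isFin_JMat n)) (isFin_smul _ (isFin_qMat n m))]
  rw [M.smul_lsmul _ _ _ (isFin_JMat n), M.smul_lsmul _ _ _ (isFin_qMat n m)]
  rw [M.lsmul_add (JMat n), M.lsmul_add (qMat n m)]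
  rw [lsmul_smul_vec M _ (isFin_JMat n) hfp hu1, lsmul_smul_vec M _ (isFin_JMat n) hfp hu2,
    lsmul_smul_vec M _ (isFin_qMat n m) hfq hu1, lsmul_smul_vec M _ (isFin_qMat n m) hfq hu2]
  push_cast
  module

end Statement0Aux

open Statement0Aux in
/-- In a non-degenerate ordered `𝔉`-bimodule `(𝔙, 𝔙⁺)` with `𝔙⁺`
proper and Archimedean, `𝔲, 𝔳 ∈ 𝔙⁺` and `𝔲 ≤ 𝔳` imply `o(𝔲) ≤ o(𝔳)`. -/
theorem statement0 {V : Type*} [AddCommGroup V] [Module ℂ V] (M : FBimod V) (C : Set V)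
    (hC : M.IsCone C) (hproper : FBimod.ConeProper C) (harch : M.ConeArch C)
    (u v : V) (hu : u ∈ C) (hv : v ∈ C) (hle : v - u ∈ C) :
    M.ord u ≤ M.ord v := by
  obtain ⟨hstar, hadd, hconj⟩ := hC
  have hne : {k | M.cut k v = v}.Nonempty := M.nondeg v
  have hvcut : M.cut (M.ord v) v = v := Nat.sInf_mem hne
  set n := M.ord v with hn
  obtain ⟨m₀, hm₀⟩ := M.nondeg u
  have hm₀' : M.cut m₀ u = u := hm₀
  set m := max n m₀ with hm
  have hnm : n ≤ m := le_max_left _ _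
  have hcutmu : M.cut m u = u := cut_mono M hm₀' (le_max_right _ _)
  set u1 := M.rsmul u (JMat n) with hu1def
  set u2 := M.rsmul u (qMat n m) with hu2def
  set P := M.lsmul (JMat n) u1 with hPdef
  set S1 := M.lsmul (JMat n) u2 with hS1def
  set S2 := M.lsmul (qMat n m) u1 with hS2def
  set Q := M.lsmul (qMat n m) u2 with hQdef
  have hfsq := fstar_qMat n m
  -- Q ∈ C
  have hQmem : Q ∈ C := by
    have h := hconj u hu (qMat n m) (isFin_qMat n m)
    unfold FBimod.conj at h
    rw [hfsq, ← hu2def, ← hQdef] at h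
    exact h
  -- v q = 0
  have hvq : M.rsmul v (qMat n m) = 0 := by
    conv_lhs => rw [← hvcut]
    unfold FBimod.cut
    rw [M.lsmul_rsmul _ _ _ (isFin_JMat n) (isFin_qMat n m),
      ← M.rsmul_mul _ _ _ (isFin_JMat n) (isFin_qMat n m),
      fmul_JMat_qMat, rsmul_zero, lsmul_zero]
  have hnegQ : -Q ∈ C := by
    have h := hconj (v - u) hle (qMat n m) (isFin_qMat n m)
    unfold FBimod.conj at h
    rw [hfsq, sub_rsmul, hvq, zero_sub, lsmul_neg, ← hu2def, ← hQdef] at h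
    exact h
  have hQ0 : Q = 0 := hproper Q hQmem hnegQ
  -- star symmetry of cross terms
  have hsu : M.star u = u := hstar u hu
  have hstar12 : M.star S1 = S2 := by
    rw [hS1def, M.star_lsmul _ _ (isFin_JMat n), fstar_JMat, hu2def,
      M.star_rsmul _ _ (isFin_qMat n m), hfsq, hsu,
      M.lsmul_rsmul _ _ _ (isFin_qMat n m) (isFin_JMat n), hS2def, hu1def]
  have hstar21 : M.star S2 = S1 := by
    rw [hS2def, M.star_lsmul _ _ (isFin_qMat n m), hfsq, hu1def,
      M.star_rsmul _ _ (isFin_JMat n), fstar_JMat, hsu,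
      M.lsmul_rsmul _ _ _ (isFin_JMat n) (isFin_qMat n m), hS1def, hu2def]
  have hstarS : M.star (S1 + S2) = S1 + S2 := by
    rw [M.star_add, hstar12, hstar21, add_comm]
  -- P ∈ C
  have hPmem : P ∈ C := by
    have h := hconj u hu (JMat n) (isFin_JMat n)
    unfold FBimod.conj at h
    rw [fstar_JMat, ← hu1def, ← hPdef] at h
    exact h
  -- Archimedean argument, positive sign
  have harchS : ∀ k : ℝ, 0 < k → (k : ℂ) • P + (S1 + S2) ∈ C := by
    intro k hk
    have hkpos : 0 < Real.sqrt k := Real.sqrt_pos.mpr hk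
    have h := hconj u hu
      ((Real.sqrt k : ℂ) • JMat n + ((1 / Real.sqrt k : ℝ) : ℂ) • qMat n m)
      (isFin_add (isFin_smul _ (isFin_JMat n)) (isFin_smul _ (isFin_qMat n m)))
    rw [key_expand M hnm hcutmu] at h
    rw [← hu1def, ← hu2def, ← hPdef, ← hS1def, ← hS2def, ← hQdef] at h
    have h1 : Real.sqrt k * (1 / Real.sqrt k) = 1 := by field_simp
    rw [Real.mul_self_sqrt hk.le, h1, hQ0, smul_zero, add_zero,
      Complex.ofReal_one, one_smul, one_smul, add_assoc] at h
    exact h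
  have hSmem : S1 + S2 ∈ C := harch P hPmem (S1 + S2) hstarS harchS
  -- negative sign
  have harchS' : ∀ k : ℝ, 0 < k → (k : ℂ) • P + -(S1 + S2) ∈ C := by
    intro k hk
    have hkpos : 0 < Real.sqrt k := Real.sqrt_pos.mpr hk
    have h := hconj u hu
      ((Real.sqrt k : ℂ) • JMat n + ((-(1 / Real.sqrt k) : ℝ) : ℂ) • qMat n m)
      (isFin_add (isFin_smul _ (isFin_JMat n)) (isFin_smul _ (isFin_qMat n m)))
    rw [key_expand M hnm hcutmu] at h
    rw [← hu1def, ← hu2def, ← hPdef, ← hS1def, ← hS2def, ← hQdef] at h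
    have h1 : Real.sqrt k * -(1 / Real.sqrt k) = -1 := by field_simp
    rw [Real.mul_self_sqrt hk.le, h1, hQ0, smul_zero, add_zero,
      Complex.ofReal_neg, Complex.ofReal_one, neg_one_smul, neg_one_smul,
      add_assoc, ← neg_add] at h
    exact h
  have hstarS' : M.star (-(S1 + S2)) = -(S1 + S2) := by
    rw [mstar_neg M, hstarS]
  have hnegS : -(S1 + S2) ∈ C := harch P hPmem (-(S1 + S2)) hstarS' harchS'
  have hS0 : S1 + S2 = 0 := hproper (S1 + S2) hSmem hnegS
  -- conclude u = P
  have hJm : ((1 : ℝ) : ℂ) • JMat n + ((1 : ℝ) : ℂ) • qMat n m = JMat m := by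
    rw [Complex.ofReal_one, one_smul, one_smul, ← JMat_split hnm]
  have hfin := key_expand M hnm hcutmu 1 1
  rw [hJm] at hfin
  have hconjJ : M.conj (JMat m) u = u := by
    unfold FBimod.conj
    rw [fstar_JMat]
    exact hcutmu
  rw [hconjJ] at hfin
  rw [← hu1def, ← hu2def, ← hPdef, ← hS1def, ← hS2def, ← hQdef] at hfin
  rw [hQ0, smul_zero, add_zero, mul_one, Complex.ofReal_one, one_smul, one_smul,
    one_smul, add_assoc, hS0, add_zero] at hfin
  have hcutn : M.cut n u = u := by
    unfold FBimod.cut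
    rw [← hu1def, ← hPdef]
    exact hfin.symm
  exact Nat.sInf_le hcutn
end
end

section
/- Let (𝔙, 𝔙⁺, |·|) be a non-degenerate absolutely ordered 𝔉-bimodule. If 𝔳 ∈ 𝔙 and 𝔞 ∈ 𝔉 satisfies 𝔞*𝔞 = 𝔍_{o(𝔳)}, then |𝔞𝔳| = |𝔳|. -/
noncomputable section

open scoped Matrix.Norms.L2Operator

section Statement1Aux

open scoped Matrix.Norms.L2Operator

/-- top-left `k × k` block of an infinite matrix -/
private def blk (a : FMat) (k : ℕ) : Matrix (Fin k) (Fin k) ℂ :=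
  Matrix.of fun i j : Fin k => a i j

private lemma fnorm_eq_blk (a : FMat) : fnorm a = ⨆ k : ℕ, ‖blk a k‖ := rfl

private lemma isFin_zero : IsFin (0 : FMat) := ⟨0, fun _ _ _ => rfl⟩

private lemma isFin_J (n : ℕ) : IsFin (JMat n) := by
  refine ⟨n, fun i j hij => ?_⟩
  simp only [JMat, ite_eq_right_iff]
  rintro ⟨rfl, hi⟩
  omega

private lemma isFin_fstar {a : FMat} (ha : IsFin a) : IsFin (fstar a) := by
  obtain ⟨N, hN⟩ := ha
  exact ⟨N, fun i j hij => by simp [fstar, hN j i hij.symm]⟩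

private lemma fmul_J_J {m n : ℕ} (h : m ≤ n) :
    fmul (JMat n) (JMat m) = JMat m ∧ fmul (JMat m) (JMat n) = JMat m := by
  constructor <;> funext i k
  · show (∑' j, JMat n i j * JMat m j k) = JMat m i k
    rw [tsum_eq_single i]
    · by_cases hi : i < n
      · simp [JMat, hi]
      · have hi' : ¬ i < m := by omega
        simp [JMat, hi, hi']
    · intro j hj
      have : JMat n i j = 0 := by
        simp only [JMat, ite_eq_right_iff]
        rintro ⟨rfl, -⟩
        exact absurd rfl hj
      rw [this, zero_mul]
  · show (∑' j, JMat m i j * JMat n j k) = JMat m i k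
    rw [tsum_eq_single i]
    · by_cases hi : i < m
      · have hi' : i < n := by omega
        simp [JMat, hi, hi']
      · simp [JMat, hi]
    · intro j hj
      have : JMat m i j = 0 := by
        simp only [JMat, ite_eq_right_iff]
        rintro ⟨rfl, -⟩
        exact absurd rfl hj
      rw [this, zero_mul]

private lemma fmul_J_J_self (n : ℕ) : fmul (JMat n) (JMat n) = JMat n :=
  (fmul_J_J (le_refl n)).1

namespace FBimod

variable {V : Type*} [AddCommGroup V] [Module ℂ V] (M : FBimod V)

private lemma lsmul_zero_left (w : V) : M.lsmul 0 w = 0 := by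
  have h := M.add_lsmul 0 0 w isFin_zero isFin_zero
  rw [add_zero] at h
  exact left_eq_add.mp h

private lemma cut_cut {m n : ℕ} (h : m ≤ n) (w : V) :
    M.cut n (M.cut m w) = M.cut m w := by
  show M.lsmul (JMat n) (M.rsmul (M.lsmul (JMat m) (M.rsmul w (JMat m))) (JMat n))
      = M.lsmul (JMat m) (M.rsmul w (JMat m))
  rw [M.lsmul_rsmul _ _ _ (isFin_J m) (isFin_J n),
      ← M.rsmul_mul w _ _ (isFin_J m) (isFin_J n), (fmul_J_J h).2,
      ← M.mul_lsmul _ _ _ (isFin_J n) (isFin_J m), (fmul_J_J h).1]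

private lemma cut_ord (w : V) : M.cut (M.ord w) w = w :=
  Nat.sInf_mem (M.nondeg w)

private lemma cut_of_le {m n : ℕ} (h : m ≤ n) {w : V} (hw : M.cut m w = w) :
    M.cut n w = w := by
  conv_lhs => rw [← hw]
  rw [M.cut_cut h w, hw]

private lemma rsmul_J_of_cut {n : ℕ} {w : V} (hw : M.cut n w = w) :
    M.rsmul w (JMat n) = w := by
  conv_lhs => rw [← hw]
  show M.rsmul (M.lsmul (JMat n) (M.rsmul w (JMat n))) (JMat n) = w
  rw [M.lsmul_rsmul _ _ _ (isFin_J n) (isFin_J n),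
      ← M.rsmul_mul w _ _ (isFin_J n) (isFin_J n), fmul_J_J_self]
  exact hw

private lemma lsmul_J_of_cut {n : ℕ} {w : V} (hw : M.cut n w = w) :
    M.lsmul (JMat n) w = w := by
  conv_lhs => rw [← hw]
  show M.lsmul (JMat n) (M.lsmul (JMat n) (M.rsmul w (JMat n))) = w
  rw [← M.mul_lsmul _ _ _ (isFin_J n) (isFin_J n), fmul_J_J_self]
  exact hw

end FBimod

end Statement1Aux
section Statement1Norm

open scoped Matrix.Norms.L2Operator
open Matrix

private lemma norm_one_matrix_le (k : ℕ) : ‖(1 : Matrix (Fin k) (Fin k) ℂ)‖ ≤ 1 := by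
  rcases Nat.eq_zero_or_pos k with rfl | hk
  · have h1 : (1 : Matrix (Fin 0) (Fin 0) ℂ) = 0 := by ext i; exact i.elim0
    rw [h1, norm_zero]; norm_num
  · have h := Matrix.l2_opNorm_conjTranspose_mul_self (1 : Matrix (Fin k) (Fin k) ℂ)
    rw [Matrix.conjTranspose_one, mul_one] at h
    nlinarith [norm_nonneg (1 : Matrix (Fin k) (Fin k) ℂ)]

private lemma norm_submatrix_le {k K : ℕ} (hk : k ≤ K) (A : Matrix (Fin K) (Fin K) ℂ) :
    ‖A.submatrix (Fin.castLE hk) (Fin.castLE hk)‖ ≤ ‖A‖ := by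
  classical
  set P : Matrix (Fin k) (Fin K) ℂ :=
    Matrix.of fun i j => if j = Fin.castLE hk i then (1 : ℂ) else 0 with hP
  have hPB : ∀ (B : Matrix (Fin K) (Fin K) ℂ) i t, (P * B) i t = B (Fin.castLE hk i) t := by
    intro B i t
    rw [Matrix.mul_apply, Finset.sum_eq_single (Fin.castLE hk i)]
    · simp [hP]
    · intro s _ hs
      simp [hP, hs]
    · intro hmem; exact absurd (Finset.mem_univ _) hmem
  have hPH : ∀ (B : Matrix (Fin k) (Fin K) ℂ) i t, (B * Pᴴ) i t = B i (Fin.castLE hk t) := by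
    intro B i t
    rw [Matrix.mul_apply, Finset.sum_eq_single (Fin.castLE hk t)]
    · simp [hP, Matrix.conjTranspose_apply]
    · intro s _ hs
      simp [hP, Matrix.conjTranspose_apply, hs]
    · intro hmem; exact absurd (Finset.mem_univ _) hmem
  have hsub : P * A * Pᴴ = A.submatrix (Fin.castLE hk) (Fin.castLE hk) := by
    ext i j
    rw [hPH, hPB, Matrix.submatrix_apply]
  have hPP : P * Pᴴ = 1 := by
    ext i j
    rw [hPH]
    by_cases hij : i = j
    · subst hij; simp [hP]
    · have : Fin.castLE hk j ≠ Fin.castLE hk i := by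
        intro hcon
        exact hij (by exact (Fin.castLE_inj.mp hcon).symm)
      simp [hP, Matrix.one_apply, hij, this]
  have hPnorm : ‖P‖ ≤ 1 := by
    have h1 := Matrix.l2_opNorm_conjTranspose_mul_self (Pᴴ)
    rw [Matrix.conjTranspose_conjTranspose, hPP] at h1
    have h2 : ‖Pᴴ‖ = ‖P‖ := Matrix.l2_opNorm_conjTranspose P
    rw [h2] at h1
    have h3 := norm_one_matrix_le k
    nlinarith [norm_nonneg P]
  have hPHnorm : ‖Pᴴ‖ ≤ 1 := by rw [Matrix.l2_opNorm_conjTranspose]; exact hPnorm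
  calc ‖A.submatrix (Fin.castLE hk) (Fin.castLE hk)‖ = ‖P * A * Pᴴ‖ := by rw [hsub]
    _ ≤ ‖P * A‖ * ‖Pᴴ‖ := Matrix.l2_opNorm_mul _ _
    _ ≤ (‖P‖ * ‖A‖) * ‖Pᴴ‖ := by
        exact mul_le_mul_of_nonneg_right (Matrix.l2_opNorm_mul P A) (norm_nonneg _)
    _ ≤ (‖P‖ * ‖A‖) * 1 :=
        mul_le_mul_of_nonneg_left hPHnorm (mul_nonneg (norm_nonneg _) (norm_nonneg _))
    _ = ‖P‖ * ‖A‖ := mul_one _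
    _ ≤ 1 * ‖A‖ := mul_le_mul_of_nonneg_right hPnorm (norm_nonneg _)
    _ = ‖A‖ := one_mul _

private lemma blk_eq_submatrix (a : FMat) {k K : ℕ} (hk : k ≤ K) :
    blk a k = (blk a K).submatrix (Fin.castLE hk) (Fin.castLE hk) := by
  ext i j; rfl

private lemma blk_fstar (a : FMat) (k : ℕ) : blk (fstar a) k = (blk a k)ᴴ := by
  ext i j
  simp [blk, fstar, Matrix.conjTranspose_apply]

private lemma fnorm_eq_one {a : FMat} (ha : IsFin a) {n : ℕ} (hn : 0 < n)
    (haa : fmul (fstar a) a = JMat n) : fnorm a = 1 ∧ fnorm (fstar a) = 1 := by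
  classical
  obtain ⟨N, hN⟩ := ha
  have key : ∀ K, N ≤ K → (blk a K)ᴴ * blk a K = blk (JMat n) K := by
    intro K h1
    ext i l
    rw [← haa]
    show ∑ j : Fin K, (blk a K)ᴴ i j * blk a K j l = fmul (fstar a) a (i : ℕ) (l : ℕ)
    show ∑ j : Fin K, (blk a K)ᴴ i j * blk a K j l = ∑' j : ℕ, fstar a i j * a j l
    rw [tsum_eq_sum (s := Finset.range K) (by
      intro b hb
      have hNb : N ≤ b := le_trans h1 (le_of_not_gt (by simpa using hb))
      show (starRingEnd ℂ) (a b i) * a b l = 0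
      rw [hN b i (Or.inl hNb)]
      simp)]
    rw [← Fin.sum_univ_eq_sum_range (fun j => fstar a i j * a j l) K]
    rfl
  have hdiag : ∀ K, n ≤ K → ‖blk (JMat n) K‖ = 1 := by
    intro K h2
    have hD : blk (JMat n) K
        = Matrix.diagonal (fun i : Fin K => if (i : ℕ) < n then (1 : ℂ) else 0) := by
      ext i j
      by_cases hij : i = j
      · subst hij
        rw [Matrix.diagonal_apply_eq]
        show (if (i : ℕ) = (i : ℕ) ∧ (i : ℕ) < n then (1 : ℂ) else 0) = _
        by_cases hi : (i : ℕ) < n <;> simp [hi]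
      · rw [Matrix.diagonal_apply_ne _ hij]
        show (if (i : ℕ) = (j : ℕ) ∧ (i : ℕ) < n then (1 : ℂ) else 0) = 0
        have hne : (i : ℕ) ≠ (j : ℕ) := fun hc => hij (Fin.ext hc)
        simp [hne]
    set D := blk (JMat n) K with hDdef
    have hstar : (star fun i : Fin K => if (i : ℕ) < n then (1 : ℂ) else 0)
        = fun i : Fin K => if (i : ℕ) < n then (1 : ℂ) else 0 := by
      funext i
      by_cases hi : (i : ℕ) < n <;> simp [Pi.star_apply, hi]
    have hDH : Dᴴ = D := by
      rw [hD, Matrix.diagonal_conjTranspose, hstar]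
    have hsq : (fun i : Fin K => (if (i : ℕ) < n then (1 : ℂ) else 0)
          * (if (i : ℕ) < n then (1 : ℂ) else 0))
        = fun i : Fin K => if (i : ℕ) < n then (1 : ℂ) else 0 := by
      funext i
      by_cases hi : (i : ℕ) < n <;> simp [hi]
    have hDD : D * D = D := by
      rw [hD, Matrix.diagonal_mul_diagonal, hsq]
    have hDne : D ≠ 0 := by
      intro h0
      have hz : D ⟨0, lt_of_lt_of_le hn h2⟩ ⟨0, lt_of_lt_of_le hn h2⟩ = 0 := by rw [h0]; rfl
      rw [hD, Matrix.diagonal_apply_eq] at hz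
      simp [hn] at hz
    have hnrm := Matrix.l2_opNorm_conjTranspose_mul_self D
    rw [hDH, hDD] at hnrm
    have hne : ‖D‖ ≠ 0 := fun hc => hDne (norm_eq_zero.mp hc)
    have : ‖D‖ * (‖D‖ - 1) = 0 := by nlinarith
    rcases mul_eq_zero.mp this with hc | hc
    · exact absurd hc hne
    · linarith
  have normK : ∀ K, N ≤ K → n ≤ K → ‖blk a K‖ = 1 := by
    intro K h1 h2
    have hnrm := Matrix.l2_opNorm_conjTranspose_mul_self (blk a K)
    rw [key K h1, hdiag K h2] at hnrm
    nlinarith [norm_nonneg (blk a K)]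
  have norm_le : ∀ k, ‖blk a k‖ ≤ 1 := by
    intro k
    set K := max k (max N n) with hK
    have hkK : k ≤ K := le_max_left _ _
    rw [blk_eq_submatrix a hkK]
    calc ‖(blk a K).submatrix (Fin.castLE hkK) (Fin.castLE hkK)‖ ≤ ‖blk a K‖ :=
          norm_submatrix_le hkK _
      _ = 1 := normK K (le_trans (le_max_left _ _) (le_max_right _ _))
          (le_trans (le_max_right _ _) (le_max_right _ _))
  have hbdd : BddAbove (Set.range fun k => ‖blk a k‖) := by
    refine ⟨1, ?_⟩
    rintro x ⟨k, rfl⟩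
    exact norm_le k
  have hfa : fnorm a = 1 := by
    rw [fnorm_eq_blk]
    refine le_antisymm (ciSup_le norm_le) ?_
    have h1 : ‖blk a (max N n)‖ = 1 := normK _ (le_max_left _ _) (le_max_right _ _)
    calc (1 : ℝ) = ‖blk a (max N n)‖ := h1.symm
      _ ≤ ⨆ k : ℕ, ‖blk a k‖ := le_ciSup hbdd _
  refine ⟨hfa, ?_⟩
  have : ∀ k, ‖blk (fstar a) k‖ = ‖blk a k‖ := by
    intro k
    rw [blk_fstar, Matrix.l2_opNorm_conjTranspose]
  rw [fnorm_eq_blk]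
  calc (⨆ k : ℕ, ‖blk (fstar a) k‖) = ⨆ k : ℕ, ‖blk a k‖ := by
        congr 1; funext k; exact this k
    _ = 1 := by rw [← fnorm_eq_blk]; exact hfa

end Statement1Norm
/-- In a non-degenerate absolutely ordered `𝔉`-bimodule, if
`𝔞*𝔞 = 𝔍_{o(𝔳)}` then `|𝔞𝔳| = |𝔳|`. -/
theorem statement1 {V : Type*} [AddCommGroup V] [Module ℂ V] (M : FBimod V) (C : Set V)
    (abs : V → V) (h : M.IsAbsOrd C abs) (v : V) (a : FMat) (ha : IsFin a)
    (haa : fmul (fstar a) a = JMat (M.ord v)) :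
    abs (M.lsmul a v) = abs v := by
  rcases Nat.eq_zero_or_pos (M.ord v) with hn0 | hpos
  · -- degenerate case: `o(𝔳) = 0`, so `𝔳 = 0` and `𝔞 = 0`
    have hJ0 : JMat 0 = (0 : FMat) := by
      funext k l; simp [JMat]
    have hv : v = 0 := by
      have hc : M.cut (M.ord v) v = v := M.cut_ord v
      rw [hn0] at hc
      have hz : M.cut 0 v = 0 := by
        show M.lsmul (JMat 0) (M.rsmul v (JMat 0)) = 0
        rw [hJ0, M.lsmul_zero_left]
      rw [hz] at hc
      exact hc.symm
    have ha0 : a = 0 := by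
      rw [hn0, hJ0] at haa
      obtain ⟨N, hN⟩ := ha
      funext p q
      show a p q = (0 : ℂ)
      have hq : fmul (fstar a) a q q = 0 := by rw [haa]; rfl
      have hsum : (∑' j : ℕ, fstar a q j * a j q) = 0 := hq
      have hfin : (∑' j : ℕ, fstar a q j * a j q)
          = ∑ j ∈ Finset.range N, (Complex.normSq (a j q) : ℂ) := by
        rw [tsum_eq_sum (s := Finset.range N) (by
          intro b hb
          have hNb : N ≤ b := le_of_not_gt (by simpa using hb)
          show (starRingEnd ℂ) (a b q) * a b q = 0
          rw [hN b q (Or.inl hNb)]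
          simp)]
        refine Finset.sum_congr rfl fun j _ => ?_
        show (starRingEnd ℂ) (a j q) * a j q = _
        exact Complex.normSq_eq_conj_mul_self.symm
      have hS : (∑ j ∈ Finset.range N, Complex.normSq (a j q)) = 0 := by
        have hc : ((∑ j ∈ Finset.range N, Complex.normSq (a j q) : ℝ) : ℂ) = 0 := by
          push_cast
          rw [← hfin]
          exact hsum
        exact_mod_cast hc
      by_cases hp : p < N
      · have hnn : ∀ i ∈ Finset.range N, 0 ≤ Complex.normSq (a i q) :=
          fun i _ => Complex.normSq_nonneg _
        have := (Finset.sum_eq_zero_iff_of_nonneg hnn).mp hS p (Finset.mem_range.mpr hp)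
        exact Complex.normSq_eq_zero.mp this
      · exact hN p q (Or.inl (le_of_not_gt hp))
    rw [hv, ha0, M.lsmul_zero_left]
  · -- main case
    obtain ⟨hfa, hfs⟩ := fnorm_eq_one ha hpos haa
    have hcutv : M.cut (M.ord v) v = v := M.cut_ord v
    have hrv : M.rsmul v (JMat (M.ord v)) = v := M.rsmul_J_of_cut hcutv
    have habsv_cut : M.cut (M.ord v) (abs v) = abs v :=
      M.cut_of_le (h.ord_abs_le v) (M.cut_ord (abs v))
    have hrabsv : M.rsmul (abs v) (JMat (M.ord v)) = abs v := M.rsmul_J_of_cut habsv_cut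
    have hlv : M.lsmul (JMat (M.ord v)) v = v := M.lsmul_J_of_cut hcutv
    have d1 : abs v - abs (M.lsmul a v) ∈ C := by
      have hle := h.abs_smul_le a (JMat (M.ord v)) ha (isFin_J _) v
      rwa [hrv, hrabsv, h.abs_of_mem _ (h.abs_mem v), hfa, Complex.ofReal_one, one_smul]
        at hle
    have hcutw : M.cut (M.ord (M.lsmul a v)) (M.lsmul a v) = M.lsmul a v :=
      M.cut_ord (M.lsmul a v)
    have hrw : M.rsmul (M.lsmul a v) (JMat (M.ord (M.lsmul a v))) = M.lsmul a v :=
      M.rsmul_J_of_cut hcutw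
    have habsw_cut : M.cut (M.ord (M.lsmul a v)) (abs (M.lsmul a v)) = abs (M.lsmul a v) :=
      M.cut_of_le (h.ord_abs_le (M.lsmul a v)) (M.cut_ord (abs (M.lsmul a v)))
    have hrabsw : M.rsmul (abs (M.lsmul a v)) (JMat (M.ord (M.lsmul a v)))
        = abs (M.lsmul a v) := M.rsmul_J_of_cut habsw_cut
    have d2 : abs (M.lsmul a v) - abs v ∈ C := by
      have hle := h.abs_smul_le (fstar a) (JMat (M.ord (M.lsmul a v)))
        (isFin_fstar ha) (isFin_J _) (M.lsmul a v)
      rw [hrw, hrabsw, h.abs_of_mem _ (h.abs_mem (M.lsmul a v)), hfs,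
        Complex.ofReal_one, one_smul,
        ← M.mul_lsmul (fstar a) a v (isFin_fstar ha) ha, haa, hlv] at hle
      exact hle
    have h0 : (0 : V) ∈ C := by
      have hc := h.cone.2.2 (abs (0 : V)) (h.abs_mem 0) 0 isFin_zero
      have hconj : M.conj (0 : FMat) (abs (0 : V)) = 0 := by
        show M.lsmul (fstar 0) (M.rsmul (abs (0 : V)) 0) = 0
        have hf0 : fstar (0 : FMat) = 0 := by funext i j; simp [fstar]
        rw [hf0, M.lsmul_zero_left]
      rwa [hconj] at hc
    have hnx : (0 : V) - (abs v - abs (M.lsmul a v)) ∈ C := by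
      rw [zero_sub, neg_sub]
      exact d2
    have habs_x : abs (abs v - abs (M.lsmul a v) - 0) = abs v - abs (M.lsmul a v) + 0 := by
      rw [sub_zero, add_zero]
      exact h.abs_of_mem _ d1
    have key := h.absorb _ d1 0 h0 _ d1 habs_x hnx
    rw [sub_self, h.abs_of_mem 0 h0] at key
    have h2 : (2 : ℂ) • (abs v - abs (M.lsmul a v)) = 0 := by
      rw [two_smul]
      exact key.symm
    have hX0 : abs v - abs (M.lsmul a v) = 0 := by
      calc abs v - abs (M.lsmul a v)
          = ((2 : ℂ)⁻¹ * 2) • (abs v - abs (M.lsmul a v)) := by norm_num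
        _ = (2 : ℂ)⁻¹ • ((2 : ℂ) • (abs v - abs (M.lsmul a v))) := by rw [smul_smul]
        _ = 0 := by rw [h2, smul_zero]
    exact (sub_eq_zero.mp hX0).symm
end
end

section
/- Let (𝔙, 𝔙⁺, |·|) be a non-degenerate absolutely ordered 𝔉-bimodule. Then for every 𝔳 ∈ 𝔙 and every local unitary 𝔞 ∈ 𝔉 with o(𝔳) ≤ o(𝔞), one has |𝔞*𝔳𝔞| = 𝔞*|𝔳|𝔞. -/
noncomputable section

open scoped Matrix.Norms.L2Operator

namespace Aux

/-- supported in n-block -/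
def Supp (a : FMat) (n : ℕ) : Prop := ∀ i j, (n ≤ i ∨ n ≤ j) → a i j = 0

lemma isFin_of_supp {a : FMat} {n : ℕ} (h : Supp a n) : IsFin a := ⟨n, h⟩

lemma supp_JMat (n : ℕ) : Supp (JMat n) n := by
  intro i j hij
  simp only [JMat, ite_eq_right_iff]
  rintro ⟨rfl, hi⟩; omega

lemma isFin_JMat (n : ℕ) : IsFin (JMat n) := ⟨n, supp_JMat n⟩

lemma supp_fstar {a : FMat} {n : ℕ} (h : Supp a n) : Supp (fstar a) n := by
  intro i j hij
  simp only [fstar, map_eq_zero]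
  exact h j i (Or.symm hij)

lemma fstar_fstar (a : FMat) : fstar (fstar a) = a := by
  funext i j; simp [fstar]

lemma supp_smul {a : FMat} {n : ℕ} (h : Supp a n) (c : ℂ) : Supp (c • a) n := by
  intro i j hij
  simp only [Pi.smul_apply, smul_eq_mul, h i j hij, mul_zero]

lemma supp_matOrd {a : FMat} (h : IsFin a) : Supp a (matOrd a) :=
  Nat.sInf_mem (s := {n | Supp a n}) h

lemma fmul_JMat_right {a : FMat} {n : ℕ} (h : Supp a n) : fmul a (JMat n) = a := by
  funext i k
  have : ∀ j, j ≠ k → a i j * JMat n j k = 0 := by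
    intro j hj
    simp only [JMat]
    rw [if_neg (by tauto), mul_zero]
  rw [fmul, tsum_eq_single k this]
  by_cases hk : k < n
  · simp [JMat, hk]
  · simp [JMat, hk, h i k (Or.inr (by omega))]

lemma fmul_JMat_left {a : FMat} {n : ℕ} (h : Supp a n) : fmul (JMat n) a = a := by
  funext i k
  have : ∀ j, j ≠ i → JMat n i j * a j k = 0 := by
    intro j hj
    simp only [JMat]
    rw [if_neg (by tauto), zero_mul]
  rw [fmul, tsum_eq_single i this]
  by_cases hi : i < n
  · simp [JMat, hi]
  · simp [JMat, hi, h i k (Or.inl (by omega))]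

lemma fmul_JMat_smul (n : ℕ) (c : ℂ) : fmul (JMat n) (c • JMat n) = c • JMat n := by
  have : Supp (c • JMat n) n := supp_smul (supp_JMat n) c
  exact fmul_JMat_left this

lemma fstar_JMat (n : ℕ) : fstar (JMat n) = JMat n := by
  funext i j
  simp only [fstar, JMat]
  by_cases h : j = i ∧ j < n
  · obtain ⟨rfl, _⟩ := h; simp_all
  · rw [if_neg h, map_zero, if_neg]
    rintro ⟨rfl, hi⟩; exact h ⟨rfl, hi⟩

lemma fstar_real_smul_JMat (s : ℝ) (n : ℕ) :
    fstar ((s : ℂ) • JMat n) = (s : ℂ) • JMat n := by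
  funext i j
  simp only [fstar, Pi.smul_apply, smul_eq_mul, map_mul, Complex.conj_ofReal]
  rw [show (starRingEnd ℂ) (JMat n j i) = JMat n i j by
    rw [← fstar]; rw [fstar_JMat]]

lemma matOrd_fstar {a : FMat} : matOrd (fstar a) = matOrd a := by
  unfold matOrd
  congr 1
  ext n
  constructor
  · intro h i j hij
    have := h j i (Or.symm hij)
    simpa [fstar] using this
  · intro h i j hij
    simp only [fstar, map_eq_zero]
    exact h j i (Or.symm hij)

lemma isLocalUnitary_fstar {a : FMat} (h : IsLocalUnitary a) : IsLocalUnitary (fstar a) := by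
  obtain ⟨⟨n, hn⟩, h1, h2⟩ := h
  refine ⟨⟨n, supp_fstar hn⟩, ?_, ?_⟩
  · rw [fstar_fstar, matOrd_fstar]; exact h2
  · rw [fstar_fstar, matOrd_fstar]; exact h1


open Matrix

/-- the inclusion matrix `Fin m → Fin N`. -/
def incl (m N : ℕ) : Matrix (Fin m) (Fin N) ℂ :=
  Matrix.of fun i j => if (i : ℕ) = (j : ℕ) then 1 else 0

lemma incl_mul_conjTranspose {m N : ℕ} (h : m ≤ N) :
    incl m N * (incl m N)ᴴ = 1 := by
  ext i j
  rw [Matrix.mul_apply]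
  rw [Finset.sum_eq_single (Fin.castLE h i)]
  · by_cases hij : i = j
    · subst hij; simp [incl, Matrix.one_apply]
    · have hji : ¬((j:ℕ) = (i:ℕ)) := by
        simpa [Fin.val_eq_val] using Ne.symm hij
      simp [incl, Matrix.one_apply, hij, hji]
  · intro l _ hl
    rw [incl, Matrix.of_apply, if_neg, zero_mul]
    intro hlv
    exact hl (Fin.ext (by simp only [Fin.coe_castLE]; omega))
  · intro hmem; exact absurd (Finset.mem_univ _) hmem

lemma norm_incl_le_one {m N : ℕ} (h : m ≤ N) : ‖incl m N‖ ≤ 1 := by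
  have h1 : ‖incl m N‖ * ‖incl m N‖ = ‖incl m N * (incl m N)ᴴ‖ := by
    have := Matrix.l2_opNorm_conjTranspose_mul_self (incl m N)ᴴ
    rw [Matrix.conjTranspose_conjTranspose, Matrix.l2_opNorm_conjTranspose] at this
    exact this.symm
  rw [incl_mul_conjTranspose h] at h1
  have hone : ‖(1 : Matrix (Fin m) (Fin m) ℂ)‖ ≤ 1 := by
    rcases Nat.eq_zero_or_pos m with hm | hm
    · subst hm
      have : (1 : Matrix (Fin 0) (Fin 0) ℂ) = 0 := Subsingleton.elim _ _
      rw [this, norm_zero]; norm_num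
    · haveI : Nonempty (Fin m) := ⟨⟨0, hm⟩⟩
      haveI : Nontrivial (Matrix (Fin m) (Fin m) ℂ) := by
        refine ⟨0, 1, fun hc => ?_⟩
        have := congrFun (congrFun hc ⟨0, hm⟩) ⟨0, hm⟩
        simp [Matrix.one_apply] at this
      exact le_of_eq CStarRing.norm_one
  nlinarith [norm_nonneg (incl m N)]

lemma norm_block_le_one {a : FMat} (ha : IsLocalUnitary a) (m : ℕ) :
    ‖(Matrix.of fun i j : Fin m => a i j : Matrix (Fin m) (Fin m) ℂ)‖ ≤ 1 := by
  obtain ⟨hfin, hmul, -⟩ := ha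
  set n := matOrd a with hn
  have hsupp : Supp a n := supp_matOrd hfin
  set N := max m n with hN
  have hmN : m ≤ N := le_max_left _ _
  have hnN : n ≤ N := le_max_right _ _
  set A : Matrix (Fin N) (Fin N) ℂ := Matrix.of fun i j => a i j with hA
  -- Aᴴ * A is a diagonal projection
  have hAA : Aᴴ * A = Matrix.diagonal (fun i : Fin N => if (i : ℕ) < n then (1:ℂ) else 0) := by
    ext i j
    rw [Matrix.mul_apply]
    have hts := congrFun (congrFun hmul (i : ℕ)) (j : ℕ)
    rw [show fmul (fstar a) a (i:ℕ) (j:ℕ) = ∑' k, (starRingEnd ℂ) (a k i) * a k j from rfl] at hts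
    have hfs : ∑' k : ℕ, (starRingEnd ℂ) (a k (i:ℕ)) * a k (j:ℕ)
        = ∑ k ∈ Finset.range N, (starRingEnd ℂ) (a k (i:ℕ)) * a k (j:ℕ) := by
      refine tsum_eq_sum ?_
      intro k hk
      rw [Finset.mem_range, not_lt] at hk
      rw [hsupp k j (Or.inl (le_trans hnN hk)), mul_zero]
    rw [hfs] at hts
    have hsum : ∑ k : Fin N, Aᴴ i k * A k j
        = ∑ k ∈ Finset.range N, (starRingEnd ℂ) (a k (i:ℕ)) * a k (j:ℕ) := by
      rw [← Fin.sum_univ_eq_sum_range (fun k => (starRingEnd ℂ) (a k (i:ℕ)) * a k (j:ℕ)) N]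
      refine Finset.sum_congr rfl fun k _ => ?_
      simp only [hA, Matrix.conjTranspose_apply, Matrix.of_apply, starRingEnd_apply]
    rw [hsum, hts]
    by_cases hij : i = j
    · subst hij
      by_cases hi : (i : ℕ) < n
      · simp [JMat, hi, Matrix.diagonal_apply_eq]
      · simp [JMat, hi, Matrix.diagonal_apply_eq]
    · rw [Matrix.diagonal_apply_ne _ hij, JMat, if_neg]
      rintro ⟨hv, -⟩
      exact hij (by ext; exact hv)
  have hD : ‖Matrix.diagonal (fun i : Fin N => if (i : ℕ) < n then (1:ℂ) else 0)‖ ≤ 1 := by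
    set D := Matrix.diagonal (fun i : Fin N => if (i : ℕ) < n then (1:ℂ) else 0) with hDdef
    have hsq : D * D = D := by
      rw [hDdef, Matrix.diagonal_mul_diagonal]
      refine congrArg _ (funext fun i => ?_)
      show (if (i:ℕ) < n then (1:ℂ) else 0) * (if (i:ℕ) < n then (1:ℂ) else 0)
        = (if (i:ℕ) < n then (1:ℂ) else 0)
      by_cases hi : (i : ℕ) < n <;> simp [hi]
    have hstar : star D = D := by
      rw [Matrix.star_eq_conjTranspose, hDdef, Matrix.diagonal_conjTranspose]
      refine congrArg _ (funext fun i => ?_)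
      show star (if (i:ℕ) < n then (1:ℂ) else 0) = (if (i:ℕ) < n then (1:ℂ) else 0)
      by_cases hi : (i : ℕ) < n <;> simp [hi]
    have := CStarRing.norm_star_mul_self (x := D)
    rw [hstar, hsq] at this
    nlinarith [norm_nonneg D]
  have hAle : ‖A‖ ≤ 1 := by
    have := Matrix.l2_opNorm_conjTranspose_mul_self A
    rw [hAA] at this
    nlinarith [norm_nonneg A, hD, norm_nonneg
      (Matrix.diagonal (fun i : Fin N => if (i : ℕ) < n then (1:ℂ) else 0))]
  -- A_m = incl * A * inclᴴ
  have hfact : (Matrix.of fun i j : Fin m => a i j : Matrix (Fin m) (Fin m) ℂ)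
      = incl m N * A * (incl m N)ᴴ := by
    ext i j
    rw [Matrix.mul_apply]
    rw [Finset.sum_eq_single (Fin.castLE hmN j)]
    · rw [Matrix.mul_apply, Finset.sum_eq_single (Fin.castLE hmN i)]
      · simp [incl, hA]
      · intro l _ hl
        rw [incl, Matrix.of_apply, if_neg, zero_mul]
        intro hc
        exact hl (Fin.ext (by simp only [Fin.coe_castLE]; omega))
      · intro hmem; exact absurd (Finset.mem_univ _) hmem
    · intro l _ hl
      rw [Matrix.conjTranspose_apply, incl, Matrix.of_apply, if_neg, star_zero, mul_zero]
      intro hc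
      exact hl (Fin.ext (by simp only [Fin.coe_castLE]; omega))
    · intro hmem; exact absurd (Finset.mem_univ _) hmem
  rw [hfact]
  have h1 := norm_incl_le_one hmN
  have h4 : ‖(incl m N)ᴴ‖ ≤ 1 := by
    rw [Matrix.l2_opNorm_conjTranspose]; exact h1
  have s1 : ‖incl m N‖ * ‖A‖ ≤ 1 := mul_le_one₀ h1 (norm_nonneg _) hAle
  calc ‖incl m N * A * (incl m N)ᴴ‖ ≤ ‖incl m N * A‖ * ‖(incl m N)ᴴ‖ :=
        Matrix.l2_opNorm_mul _ _
    _ ≤ ‖incl m N‖ * ‖A‖ * ‖(incl m N)ᴴ‖ :=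
        mul_le_mul_of_nonneg_right (Matrix.l2_opNorm_mul _ _) (norm_nonneg _)
    _ ≤ 1 := mul_le_one₀ s1 (norm_nonneg _) h4

lemma fnorm_le_one {a : FMat} (ha : IsLocalUnitary a) : fnorm a ≤ 1 :=
  ciSup_le (norm_block_le_one ha)

end Aux

namespace Aux

section Bimod

variable {V : Type*} [AddCommGroup V] [Module ℂ V] (M : FBimod V)

lemma rsmul_zero (b : FMat) : M.rsmul 0 b = 0 := by
  have h := M.rsmul_add 0 0 b
  rw [add_zero] at h
  have h2 : M.rsmul 0 b + M.rsmul 0 b = M.rsmul 0 b + 0 := by rw [add_zero]; exact h.symm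
  exact add_left_cancel h2

lemma lsmul_zero (a : FMat) : M.lsmul a 0 = 0 := by
  have h := M.lsmul_add a 0 0
  rw [add_zero] at h
  have h2 : M.lsmul a 0 + M.lsmul a 0 = M.lsmul a 0 + 0 := by rw [add_zero]; exact h.symm
  exact add_left_cancel h2

lemma rsmul_neg (v : V) (b : FMat) : M.rsmul (-v) b = - M.rsmul v b := by
  have h := M.rsmul_add v (-v) b
  rw [add_neg_cancel, rsmul_zero] at h
  exact eq_neg_of_add_eq_zero_right h.symm

lemma lsmul_neg (a : FMat) (v : V) : M.lsmul a (-v) = - M.lsmul a v := by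
  have h := M.lsmul_add a v (-v)
  rw [add_neg_cancel, lsmul_zero] at h
  exact eq_neg_of_add_eq_zero_right h.symm

lemma conj_sub (a : FMat) (u w : V) : M.conj a (u - w) = M.conj a u - M.conj a w := by
  unfold FBimod.conj
  rw [sub_eq_add_neg, M.rsmul_add, rsmul_neg, M.lsmul_add, lsmul_neg, ← sub_eq_add_neg]

lemma rsmul_JMat_of_cut {m n : ℕ} (hmn : m ≤ n) {v : V} (hv : M.cut m v = v) :
    M.rsmul v (JMat n) = v := by
  have hm : Supp (JMat m) n := fun i j hij => supp_JMat m i j (by omega)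
  conv_lhs => rw [← hv]
  show M.rsmul (M.lsmul (JMat m) (M.rsmul v (JMat m))) (JMat n) = v
  rw [M.lsmul_rsmul _ _ _ (isFin_JMat m) (isFin_JMat n),
    ← M.rsmul_mul v (JMat m) (JMat n) (isFin_JMat m) (isFin_JMat n),
    fmul_JMat_right hm]
  exact hv

lemma lsmul_JMat_of_cut {m n : ℕ} (hmn : m ≤ n) {v : V} (hv : M.cut m v = v) :
    M.lsmul (JMat n) v = v := by
  have hm : Supp (JMat m) n := fun i j hij => supp_JMat m i j (by omega)
  conv_lhs => rw [← hv]
  show M.lsmul (JMat n) (M.lsmul (JMat m) (M.rsmul v (JMat m))) = v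
  rw [← M.mul_lsmul (JMat n) (JMat m) _ (isFin_JMat n) (isFin_JMat m),
    fmul_JMat_left hm]
  exact hv

lemma cut_of_le {m n : ℕ} (hmn : m ≤ n) {v : V} (hv : M.cut m v = v) : M.cut n v = v := by
  show M.lsmul (JMat n) (M.rsmul v (JMat n)) = v
  rw [rsmul_JMat_of_cut M hmn hv, lsmul_JMat_of_cut M hmn hv]

lemma rsmul_JMat_self {n : ℕ} {v : V} (hv : M.cut n v = v) : M.rsmul v (JMat n) = v :=
  rsmul_JMat_of_cut M le_rfl hv

lemma lsmul_JMat_self {n : ℕ} {v : V} (hv : M.cut n v = v) : M.lsmul (JMat n) v = v :=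
  lsmul_JMat_of_cut M le_rfl hv

lemma cut_of_ord_le {v : V} {n : ℕ} (hv : M.ord v ≤ n) : M.cut n v = v := by
  obtain ⟨m, hm⟩ := M.nondeg v
  have hne : {k | M.cut k v = v}.Nonempty := ⟨m, hm⟩
  have h0 : M.cut (M.ord v) v = v := Nat.sInf_mem hne
  exact cut_of_le M hv h0

lemma ord_le_of_cut {v : V} {n : ℕ} (hv : M.cut n v = v) : M.ord v ≤ n :=
  Nat.sInf_le hv

lemma smul_mem {C : Set V} (hC : M.IsCone C) {x : V} (hx : x ∈ C) {c : ℝ} (hc : 0 ≤ c) :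
    (c : ℂ) • x ∈ C := by
  obtain ⟨n, hcut⟩ := M.nondeg x
  have hcut : M.cut n x = x := hcut
  set s := Real.sqrt c with hs
  have hfinsJ : IsFin ((s : ℂ) • JMat n) := isFin_of_supp (supp_smul (supp_JMat n) _)
  have key : M.conj ((s : ℂ) • JMat n) x = (c : ℂ) • x := by
    show M.lsmul (fstar ((s : ℂ) • JMat n)) (M.rsmul x ((s : ℂ) • JMat n)) = (c : ℂ) • x
    rw [fstar_real_smul_JMat, M.smul_rsmul _ _ _ (isFin_JMat n), rsmul_JMat_self M hcut]
    have hsx : M.lsmul ((s : ℂ) • JMat n) x = (s : ℂ) • x := M.smul_compat _ n x hcut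
    have hcx : M.cut n ((s : ℂ) • x) = (s : ℂ) • x := by
      rw [← hsx]
      show M.lsmul (JMat n) (M.rsmul (M.lsmul ((s : ℂ) • JMat n) x) (JMat n)) = _
      rw [M.lsmul_rsmul _ _ _ hfinsJ (isFin_JMat n), rsmul_JMat_self M hcut,
        ← M.mul_lsmul _ _ _ (isFin_JMat n) hfinsJ, fmul_JMat_smul n _]
    rw [M.smul_compat (s : ℂ) n _ hcx, smul_smul]
    have : (s : ℂ) * (s : ℂ) = (c : ℂ) := by
      rw [← Complex.ofReal_mul, Real.mul_self_sqrt hc]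
    rw [this]
  exact key ▸ hC.2.2 x hx _ hfinsJ

lemma scale_sub_mem {C : Set V} (hC : M.IsCone C) {c : ℝ} (hc : c ≤ 1) {x y : V}
    (hx : x ∈ C) (hxy : (c : ℂ) • x - y ∈ C) : x - y ∈ C := by
  have h1 : ((1 - c : ℝ) : ℂ) • x ∈ C := smul_mem M hC hx (by linarith)
  have h2 := hC.2.1 _ h1 _ hxy
  have e : ((1 - c : ℝ) : ℂ) • x + ((c : ℂ) • x - y) = x - y := by
    rw [← add_sub_assoc, ← add_smul]
    have hco : ((1 - c : ℝ) : ℂ) + (c : ℂ) = 1 := by push_cast; ring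
    rw [hco, one_smul]
  rwa [e] at h2

variable {C : Set V} {ab : V → V}

lemma ab_zero (h : M.IsAbsOrd C ab) : ab 0 = 0 := by
  have hind : M.FIndep 0 0 := by
    refine ⟨∅, ∅, by simp, ?_, ?_⟩ <;> rw [rsmul_zero, lsmul_zero]
  have h2 := h.indep_add 0 0 hind
  rw [add_zero] at h2
  have h3 : ab 0 + 0 = ab 0 + ab 0 := by rw [add_zero]; exact h2
  exact (add_left_cancel h3).symm

lemma zero_mem (h : M.IsAbsOrd C ab) : (0 : V) ∈ C := ab_zero M h ▸ h.abs_mem 0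

lemma proper (h : M.IsAbsOrd C ab) {d : V} (hd : d ∈ C) (hnd : -d ∈ C) : d = 0 := by
  have h0 : ab ((0 : V) - 0) = 0 + 0 := by
    rw [sub_zero, add_zero, ab_zero M h]
  have habs := h.absorb 0 (zero_mem M h) 0 (zero_mem M h) d hd h0
    (by rw [zero_sub]; exact hnd)
  rw [zero_sub, zero_add] at habs
  rw [h.abs_of_mem (-d) hnd] at habs
  have h2 : d + d = 0 := eq_neg_iff_add_eq_zero.mp habs.symm
  have h3 : (2 : ℂ) • d = 0 := by rw [two_smul]; exact h2
  have := smul_eq_zero.mp h3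
  exact this.resolve_left (by norm_num)

/-- Direction 1: `|b* v b| ≤ b* |v| b` for a local unitary `b`. -/
lemma key (h : M.IsAbsOrd C ab) {b : FMat} (hb : IsLocalUnitary b) {v : V}
    (hv : M.cut (matOrd b) v = v) :
    M.conj b (ab v) - ab (M.conj b v) ∈ C := by
  set n := matOrd b with hn
  have hfinb : IsFin b := hb.1
  have hsb : Supp b n := supp_matOrd hfinb
  have hsbs : Supp (fstar b) n := supp_fstar hsb
  have hfinbs : IsFin (fstar b) := ⟨n, hsbs⟩
  have hfinJ := isFin_JMat n
  set u := ab v with hu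
  have huC : u ∈ C := h.abs_mem v
  have hucut : M.cut n u = u :=
    cut_of_ord_le M (le_trans (h.ord_abs_le v) (ord_le_of_cut M hv))
  -- Step A : |b* v b| ≤ |u b|
  have hA := h.abs_smul_le (fstar b) b hfinbs hfinb v
  have hA' : ab (M.rsmul u b) - ab (M.conj b v) ∈ C :=
    scale_sub_mem M h.cone (fnorm_le_one (isLocalUnitary_fstar hb)) (h.abs_mem _) hA
  -- Step B : |u b| ≤ b* u b
  have hconjC : M.conj b u ∈ C := h.cone.2.2 u huC b hfinb
  have hcutconj : M.cut n (M.conj b u) = M.conj b u := by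
    show M.lsmul (JMat n) (M.rsmul (M.lsmul (fstar b) (M.rsmul u b)) (JMat n)) = _
    rw [M.lsmul_rsmul _ _ _ hfinbs hfinJ,
      ← M.rsmul_mul u b (JMat n) hfinb hfinJ, fmul_JMat_right hsb,
      ← M.mul_lsmul _ _ _ hfinJ hfinbs, fmul_JMat_left hsbs]
    rfl
  have hB := h.abs_smul_le b (JMat n) hfinb hfinJ (M.conj b u)
  have e1 : ab (M.conj b u) = M.conj b u := h.abs_of_mem _ hconjC
  have e2 : M.rsmul (M.conj b u) (JMat n) = M.conj b u := rsmul_JMat_self M hcutconj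
  have e3 : M.lsmul b (M.conj b u) = M.rsmul u b := by
    show M.lsmul b (M.lsmul (fstar b) (M.rsmul u b)) = _
    rw [← M.mul_lsmul b (fstar b) _ hfinb hfinbs, hb.2.2, ← hn,
      ← M.lsmul_rsmul (JMat n) u b hfinJ hfinb, lsmul_JMat_self M hucut]
  rw [e1, e2, e1, e3] at hB
  have hB' : M.conj b u - ab (M.rsmul u b) ∈ C :=
    scale_sub_mem M h.cone (fnorm_le_one hb) hconjC hB
  have hsum := h.cone.2.1 _ hB' _ hA'
  rwa [sub_add_sub_cancel] at hsum

end Bimod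

end Aux


/-- In a non-degenerate absolutely ordered `𝔉`-bimodule,
`|𝔞*𝔳𝔞| = 𝔞*|𝔳|𝔞` for every local unitary `𝔞 ∈ 𝔉` with `o(𝔳) ≤ o(𝔞)`. -/
theorem statement2 {V : Type*} [AddCommGroup V] [Module ℂ V] (M : FBimod V) (C : Set V)
    (abs : V → V) (h : M.IsAbsOrd C abs) (v : V) (a : FMat)
    (ha : IsLocalUnitary a) (hord : M.ord v ≤ matOrd a) :
    abs (M.conj a v) = M.conj a (abs v) := by
  open Aux in
  set n := matOrd a with hn
  have hfina : IsFin a := ha.1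
  have hsa : Aux.Supp a n := Aux.supp_matOrd hfina
  have hsas : Aux.Supp (fstar a) n := Aux.supp_fstar hsa
  have hfinas : IsFin (fstar a) := ⟨n, hsas⟩
  have hfinJ := Aux.isFin_JMat n
  have hv : M.cut n v = v := Aux.cut_of_ord_le M hord
  -- direction 1
  have d1 : M.conj a (abs v) - abs (M.conj a v) ∈ C := Aux.key M h ha hv
  -- direction 2
  set w := M.conj a v with hw
  have hcutw : M.cut n w = w := by
    show M.lsmul (JMat n) (M.rsmul (M.lsmul (fstar a) (M.rsmul v a)) (JMat n)) = _
    rw [M.lsmul_rsmul _ _ _ hfinas hfinJ,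
      ← M.rsmul_mul v a (JMat n) hfina hfinJ, Aux.fmul_JMat_right hsa,
      ← M.mul_lsmul _ _ _ hfinJ hfinas, Aux.fmul_JMat_left hsas]
    rfl
  have hbstar : IsLocalUnitary (fstar a) := Aux.isLocalUnitary_fstar ha
  have hcutw' : M.cut (matOrd (fstar a)) w = w := by rw [Aux.matOrd_fstar, ← hn]; exact hcutw
  have d2' : M.conj (fstar a) (abs w) - abs (M.conj (fstar a) w) ∈ C :=
    Aux.key M h hbstar hcutw'
  have c1 : M.conj (fstar a) w = v := by
    show M.lsmul (fstar (fstar a)) (M.rsmul (M.lsmul (fstar a) (M.rsmul v a)) (fstar a)) = v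
    rw [Aux.fstar_fstar, M.lsmul_rsmul _ _ _ hfinas hfinas,
      ← M.rsmul_mul v a (fstar a) hfina hfinas, ha.2.2, ← hn,
      Aux.rsmul_JMat_self M hv,
      ← M.mul_lsmul a (fstar a) v hfina hfinas, ha.2.2, ← hn,
      Aux.lsmul_JMat_self M hv]
  have hcutabsw : M.cut n (abs w) = abs w :=
    Aux.cut_of_ord_le M (le_trans (h.ord_abs_le w) (Aux.ord_le_of_cut M hcutw))
  have c2 : M.conj a (M.conj (fstar a) (abs w)) = abs w := by
    show M.lsmul (fstar a)
      (M.rsmul (M.lsmul (fstar (fstar a)) (M.rsmul (abs w) (fstar a))) a) = abs w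
    rw [Aux.fstar_fstar, M.lsmul_rsmul a _ a hfina hfina,
      ← M.rsmul_mul (abs w) (fstar a) a hfinas hfina, ha.2.1, ← hn,
      Aux.rsmul_JMat_self M hcutabsw,
      ← M.mul_lsmul (fstar a) a (abs w) hfinas hfina, ha.2.1, ← hn,
      Aux.lsmul_JMat_self M hcutabsw]
  rw [c1] at d2'
  have d2'' := h.cone.2.2 _ d2' a hfina
  rw [Aux.conj_sub, c2] at d2''
  -- d2'' : abs w - M.conj a (abs v) ∈ C
  have hz : M.conj a (abs v) - abs w = 0 := by
    refine Aux.proper M h d1 ?_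
    rw [neg_sub]
    exact d2''
  have := sub_eq_zero.mp hz
  exact this.symm
end
end
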